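/- arXiv:2010.12116 — 2 statements merged into one kernel-verified Lean document; each statement's English description precedes it below -/
import Mathlib

section
/- Let v : ℝⁿ → ℝⁿ be a C¹ vector field with complete flow φ_t, let f : ℝⁿ → ℝ be a C¹ function invariant under the flow (f(φ_t(x)) = f(x) for all x, t), let x₀ ∈ ℝⁿ, write x_t = φ_t(x₀), and let η : ℝⁿ → ℝⁿ be a vector field (tangent to a chosen one-dimensional foliation) such that ⟨∇f(x_t), η(x_t)⟩ > 0 for all t ∈ ℝ (the level surfaces of f are transverse to the foliation along the orbit, with consistent orientation). Let ξ_t = Dφ_t(x₀)η(x₀) be the pushforward of the foliation direction at x₀. Then ⟨∇f(x_t), ξ_t⟩ > 0 for every t; consequently, there exist no t ∈ ℝ, no c > 0, and no vector s with ⟨∇f(x_t), s⟩ = 0 such that ξ_t = −c·η(x_t) + s. (Contrapositive: if for some t the pushforward ξ_t equals −c·η(x_t) + s with c > 0 and s tangent to the level surface of f through x_t, then the orbit of x₀ does not lie on any invariant level surface of an invariant C¹ function whose gradient is positively transverse to η along the orbit.) -/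
open RealInnerProductSpace

/-- Let `φ` be the (complete, differentiable) flow of a `C¹` vector field `v`,
`f` a flow-invariant `C¹` function, `x₀` a point with orbit `x_t = φ_t(x₀)`, and `η`
a vector field with `⟪∇f(x_t), η(x_t)⟫ > 0` for all `t` (the level surfaces of `f` are
transverse, with consistent orientation, to the foliation along the orbit). Then the
pushforward `ξ_t = Dφ_t(x₀) η(x₀)` satisfies `⟪∇f(x_t), ξ_t⟫ > 0` for every `t`, and
there are no `t ∈ ℝ`, `c > 0` and tangent vector `s` (i.e. `⟪∇f(x_t), s⟫ = 0`) with
`ξ_t = −c • η(x_t) + s`. -/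
theorem stmt2 {n : ℕ}
    (v : EuclideanSpace ℝ (Fin n) → EuclideanSpace ℝ (Fin n)) (hv : ContDiff ℝ 1 v)
    (φ : ℝ → EuclideanSpace ℝ (Fin n) → EuclideanSpace ℝ (Fin n))
    (hφ0 : ∀ x, φ 0 x = x)
    (hφ : ∀ (t : ℝ) (x : EuclideanSpace ℝ (Fin n)),
      HasDerivAt (fun s => φ s x) (v (φ t x)) t)
    (hφdiff : ∀ t : ℝ, Differentiable ℝ (φ t))
    (f : EuclideanSpace ℝ (Fin n) → ℝ) (hf : ContDiff ℝ 1 f)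
    (hinv : ∀ (t : ℝ) (x : EuclideanSpace ℝ (Fin n)), f (φ t x) = f x)
    (x₀ : EuclideanSpace ℝ (Fin n))
    (η : EuclideanSpace ℝ (Fin n) → EuclideanSpace ℝ (Fin n))
    (hη : ∀ t : ℝ, 0 < ⟪gradient f (φ t x₀), η (φ t x₀)⟫) :
    (∀ t : ℝ, 0 < ⟪gradient f (φ t x₀), fderiv ℝ (φ t) x₀ (η x₀)⟫) ∧
    ¬ ∃ (t : ℝ) (c : ℝ) (s : EuclideanSpace ℝ (Fin n)),
        0 < c ∧ ⟪gradient f (φ t x₀), s⟫ = 0 ∧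
        fderiv ℝ (φ t) x₀ (η x₀) = -c • η (φ t x₀) + s := by
  have grad_inner : ∀ (x y : EuclideanSpace ℝ (Fin n)),
      ⟪gradient f x, y⟫ = fderiv ℝ f x y := by
    intro x y
    rw [gradient, InnerProductSpace.toDual_symm_apply]
  have key : ∀ t : ℝ,
      ⟪gradient f (φ t x₀), fderiv ℝ (φ t) x₀ (η x₀)⟫ = ⟪gradient f x₀, η x₀⟫ := by
    intro t
    have hcomp : fderiv ℝ (f ∘ φ t) x₀ =
        (fderiv ℝ f (φ t x₀)).comp (fderiv ℝ (φ t) x₀) :=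
      fderiv_comp (x := x₀) (hf.differentiable one_ne_zero (φ t x₀)) (hφdiff t x₀)
    have heq : (f ∘ φ t) = f := funext fun x => hinv t x
    rw [grad_inner, grad_inner]
    have := congrArg (fun L : EuclideanSpace ℝ (Fin n) →L[ℝ] ℝ => L (η x₀)) hcomp
    simp only [heq] at this
    simpa using this.symm
  have hpos : ∀ t : ℝ, 0 < ⟪gradient f (φ t x₀), fderiv ℝ (φ t) x₀ (η x₀)⟫ := by
    intro t
    rw [key t]
    have := hη 0
    rwa [hφ0 x₀] at this
  refine ⟨hpos, ?_⟩
  rintro ⟨t, c, s, hc, hs, hξ⟩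
  have h := hpos t
  rw [hξ, inner_add_right, hs, add_zero, inner_smul_right] at h
  have := hη t
  nlinarith
end

section
/- Let v : ℝ³ → ℝ³ be a C¹ vector field with complete flow φ_t, let f : ℝ³ → ℝ be a C¹ function invariant under the flow (f(φ_t(x)) = f(x) for all x, t), let x₀ ∈ ℝ³, write x_t = φ_t(x₀), and let η : ℝ³ → ℝ³ satisfy ⟨∇f(x_t), η(x_t)⟩ > 0 for all t ∈ ℝ. Let ξ_t = Dφ_t(x₀)η(x₀). Then for every time t at which v(x_t) and η(x_t) are linearly independent and the determinant det[v(x_t), ξ_t, η(x_t)] = 0 (the volume K(t) spanned by the three vectors vanishes), there exist a ∈ ℝ and b > 0 with ξ_t = a·v(x_t) + b·η(x_t); in particular the orthogonal projections π of ξ_t and η(x_t) onto the plane orthogonal to v(x_t) satisfy ⟨πξ_t, πη(x_t)⟩ > 0, so ξ_t can never equal −c·η(x_t) + d·v(x_t) with c > 0. (Contrapositive: if at some time det[v(x_t), ξ_t, η(x_t)] = 0 with v(x_t), η(x_t) independent and ⟨πξ_t, πη(x_t)⟩ < 0, then x₀ lies on no invariant level surface of a flow-invariant C¹ function positively transverse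 to η along the orbit.) -/
open RealInnerProductSpace

/-- Determinant of the 3×3 matrix with columns `a`, `b`, `c`. -/
noncomputable def det3 (a b c : EuclideanSpace ℝ (Fin 3)) : ℝ :=
  Matrix.det !![a 0, b 0, c 0; a 1, b 1, c 1; a 2, b 2, c 2]

/-- Orthogonal projection of `u` onto the plane orthogonal to `w`. -/
noncomputable def projAlong (w u : EuclideanSpace ℝ (Fin 3)) : EuclideanSpace ℝ (Fin 3) :=
  u - (⟪u, w⟫ / ‖w‖ ^ 2) • w

lemma det3_dep {a b c : EuclideanSpace ℝ (Fin 3)} (h : det3 a b c = 0) :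
    ∃ x y z : ℝ, ¬(x = 0 ∧ y = 0 ∧ z = 0) ∧ x • a + y • b + z • c = 0 := by
  obtain ⟨u, hu, hmu⟩ := (Matrix.exists_mulVec_eq_zero_iff).2 h
  refine ⟨u 0, u 1, u 2, ?_, ?_⟩
  · rintro ⟨h0, h1, h2⟩
    apply hu
    funext i
    fin_cases i <;> assumption
  · ext i
    have := congrFun hmu i
    fin_cases i <;>
      (simp [Matrix.mulVec, Fin.sum_univ_three, Matrix.vecHead, Matrix.vecTail] at this ⊢;
       linarith)

lemma projAlong_smul (w u : EuclideanSpace ℝ (Fin 3)) (c : ℝ) :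
    projAlong w (c • u) = c • projAlong w u := by
  unfold projAlong
  rw [real_inner_smul_left, smul_sub, smul_smul, mul_div_assoc]

lemma projAlong_add (w u v : EuclideanSpace ℝ (Fin 3)) :
    projAlong w (u + v) = projAlong w u + projAlong w v := by
  unfold projAlong
  rw [inner_add_left, add_div, add_smul]
  abel

lemma projAlong_self {w : EuclideanSpace ℝ (Fin 3)} (hw : w ≠ 0) :
    projAlong w w = 0 := by
  unfold projAlong
  rw [real_inner_self_eq_norm_sq, div_self (pow_ne_zero _ (norm_ne_zero_iff.mpr hw)), one_smul, sub_self]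

lemma inner_gradient (f : EuclideanSpace ℝ (Fin 3) → ℝ) (x u : EuclideanSpace ℝ (Fin 3)) :
    ⟪gradient f x, u⟫ = fderiv ℝ f x u :=
  InnerProductSpace.toDual_symm_apply

/-- For the flow `φ` of a `C¹` vector field `v` on `ℝ³`, a flow-invariant `C¹`
function `f`, a point `x₀` with orbit `x_t = φ_t(x₀)`, and a field `η` positively transverse
to the level sets of `f` along the orbit, let `ξ_t = Dφ_t(x₀) η(x₀)`. Then for every time `t`
at which `v(x_t)`, `η(x_t)` are linearly independent and `det[v(x_t), ξ_t, η(x_t)] = 0`,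
there are `a ∈ ℝ`, `b > 0` with `ξ_t = a • v(x_t) + b • η(x_t)`; in particular the orthogonal
projections onto the plane orthogonal to `v(x_t)` satisfy `⟪πξ_t, πη(x_t)⟫ > 0`, so `ξ_t`
can never equal `−c • η(x_t) + d • v(x_t)` with `c > 0`. -/

theorem stmt3
    (v : EuclideanSpace ℝ (Fin 3) → EuclideanSpace ℝ (Fin 3)) (hv : ContDiff ℝ 1 v)
    (φ : ℝ → EuclideanSpace ℝ (Fin 3) → EuclideanSpace ℝ (Fin 3))
    (hφ0 : ∀ x, φ 0 x = x)
    (hφ : ∀ (t : ℝ) (x : EuclideanSpace ℝ (Fin 3)),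
      HasDerivAt (fun s => φ s x) (v (φ t x)) t)
    (hφdiff : ∀ t : ℝ, Differentiable ℝ (φ t))
    (f : EuclideanSpace ℝ (Fin 3) → ℝ) (hf : ContDiff ℝ 1 f)
    (hinv : ∀ (t : ℝ) (x : EuclideanSpace ℝ (Fin 3)), f (φ t x) = f x)
    (x₀ : EuclideanSpace ℝ (Fin 3))
    (η : EuclideanSpace ℝ (Fin 3) → EuclideanSpace ℝ (Fin 3))
    (htrans : ∀ t : ℝ, 0 < ⟪gradient f (φ t x₀), η (φ t x₀)⟫)
    (t : ℝ)
    (hind : LinearIndependent ℝ ![v (φ t x₀), η (φ t x₀)])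
    (hdet : det3 (v (φ t x₀)) (fderiv ℝ (φ t) x₀ (η x₀)) (η (φ t x₀)) = 0) :
    (∃ a b : ℝ, 0 < b ∧
        fderiv ℝ (φ t) x₀ (η x₀) = a • v (φ t x₀) + b • η (φ t x₀)) ∧
    0 < ⟪projAlong (v (φ t x₀)) (fderiv ℝ (φ t) x₀ (η x₀)),
          projAlong (v (φ t x₀)) (η (φ t x₀))⟫ ∧
    ¬ ∃ c d : ℝ, 0 < c ∧
        fderiv ℝ (φ t) x₀ (η x₀) = -c • η (φ t x₀) + d • v (φ t x₀) := by
  set w : EuclideanSpace ℝ (Fin 3) := v (φ t x₀) with hw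
  set e : EuclideanSpace ℝ (Fin 3) := η (φ t x₀) with he
  set ξ : EuclideanSpace ℝ (Fin 3) := fderiv ℝ (φ t) x₀ (η x₀) with hξ
  have hfd : Differentiable ℝ f := hf.differentiable one_ne_zero
  -- basic facts from linear independence
  have hpair : ∀ s r : ℝ, s • w + r • e = 0 → s = 0 ∧ r = 0 :=
    LinearIndependent.pair_iff.mp hind
  have hw0 : w ≠ 0 := by
    intro h
    exact one_ne_zero ((hpair 1 0 (by rw [h]; simp)).1)
  -- gradient pairing with ξ equals the transversality pairing at time 0
  have hchain : fderiv ℝ f x₀ = (fderiv ℝ f (φ t x₀)).comp (fderiv ℝ (φ t) x₀) := by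
    have hc : f ∘ φ t = f := funext fun x => hinv t x
    calc fderiv ℝ f x₀ = fderiv ℝ (f ∘ φ t) x₀ := by rw [hc]
      _ = (fderiv ℝ f (φ t x₀)).comp (fderiv ℝ (φ t) x₀) :=
        fderiv_comp x₀ (hfd _) (hφdiff t x₀)
  have hgξ : 0 < ⟪gradient f (φ t x₀), ξ⟫ := by
    have h0 := htrans 0
    rw [hφ0] at h0
    rw [inner_gradient, hξ, ← ContinuousLinearMap.comp_apply, ← hchain, ← inner_gradient]
    exact h0
  -- gradient is orthogonal to w
  have hgw : ⟪gradient f (φ t x₀), w⟫ = 0 := by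
    have h1 : HasDerivAt (fun s => f (φ s x₀)) (fderiv ℝ f (φ t x₀) w) t :=
      (hfd (φ t x₀)).hasFDerivAt.comp_hasDerivAt t (hφ t x₀)
    have h2 : (fun s => f (φ s x₀)) = fun _ => f x₀ := funext fun s => hinv s x₀
    rw [h2] at h1
    have := h1.unique (hasDerivAt_const t (f x₀))
    rw [inner_gradient, this]
  -- decompose ξ
  obtain ⟨x, y, z, hxyz, heq⟩ := det3_dep hdet
  have hy : y ≠ 0 := by
    intro h
    rw [h, zero_smul, add_zero] at heq
    obtain ⟨h1, h2⟩ := hpair x z heq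
    exact hxyz ⟨h1, h, h2⟩
  have key : y • ξ = (-x) • w + (-z) • e := by
    rw [neg_smul, neg_smul, ← neg_add]
    apply eq_neg_of_add_eq_zero_left
    rw [← heq]; abel
  have hxi : ξ = (-x / y) • w + (-z / y) • e := by
    apply smul_right_injective (EuclideanSpace ℝ (Fin 3)) hy
    show y • ξ = y • ((-x / y) • w + (-z / y) • e)
    rw [key, smul_add, smul_smul, smul_smul]
    congr 1 <;> congr 1 <;> field_simp <;> ring
  set a : ℝ := -x / y with ha
  set b : ℝ := -z / y with hb
  -- b > 0
  have hgib : ⟪gradient f (φ t x₀), ξ⟫ = b * ⟪gradient f (φ t x₀), e⟫ := by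
    rw [hxi, inner_add_right, real_inner_smul_right, real_inner_smul_right, hgw,
      mul_zero, zero_add]
  have hge : 0 < ⟪gradient f (φ t x₀), e⟫ := htrans t
  have hbpos : 0 < b := by
    rw [hgib] at hgξ
    nlinarith [hgξ, hge]
  refine ⟨⟨a, b, hbpos, hxi⟩, ?_, ?_⟩
  · -- projection inner product
    have hpe : projAlong w e ≠ 0 := by
      intro h
      have h' : (⟪e, w⟫ / ‖w‖ ^ 2) • w + (-1 : ℝ) • e = 0 := by
        rw [neg_one_smul]
        have := sub_eq_zero.mp (h : e - (⟪e, w⟫ / ‖w‖ ^ 2) • w = 0)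
        rw [← this]; abel
      exact one_ne_zero (neg_eq_zero.mp (hpair _ _ h').2)
    have hproj : projAlong w ξ = b • projAlong w e := by
      rw [hxi, projAlong_add, projAlong_smul, projAlong_smul, projAlong_self hw0,
        smul_zero, zero_add]
    rw [hproj, real_inner_smul_left]
    have : 0 < ⟪projAlong w e, projAlong w e⟫ := by
      rw [real_inner_self_eq_norm_sq]
      exact pow_pos (norm_pos_iff.mpr hpe) 2
    positivity
  · rintro ⟨c, d, hc, hcd⟩
    have h2 := sub_eq_zero.mpr (hxi.symm.trans hcd)
    have h3 : (a - d) • w + (b + c) • e = 0 := by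
      rw [sub_smul, add_smul, ← h2, neg_smul]; abel
    have := (hpair _ _ h3).2
    linarith
end
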